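/- Fix an integer d ≥ 4 and set g₁ = (d−3)c₂ − (d−1)c₁², g₂ = (d−3)²(d²−3d+3)c₃ − (d−1)²(d²−3d+1)c₁³, g₃ = c₁c₃ in ℚ[c₁,c₂,c₃]. Then the quotient ℚ[c₁,c₂,c₃]/(g₁, g₂, g₃, c₁⁴) is a 4-dimensional ℚ-vector space with basis the images of 1, c₁, c₁², c₁³. -/

import Mathlib

noncomputable section

abbrev R3 : Type := MvPolynomial (Fin 3) ℚ

noncomputable def cc (i : Fin 3) : R3 := MvPolynomial.X i

noncomputable def Jrel (d : ℕ) : Ideal R3 :=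
  Ideal.span {(((d : R3) - 3) * cc 1 - ((d : R3) - 1) * cc 0 ^ 2 : R3),
    (((d : R3) - 3) ^ 2 * ((d : R3) ^ 2 - 3 * (d : R3) + 3) * cc 2
      - ((d : R3) - 1) ^ 2 * ((d : R3) ^ 2 - 3 * (d : R3) + 1) * cc 0 ^ 3 : R3),
    (cc 0 * cc 2 : R3), (cc 0 ^ 4 : R3)}

open Polynomial MvPolynomial

abbrev AR : Type := AdjoinRoot (Polynomial.X ^ 4 : ℚ[X])

lemma hX4ne : (Polynomial.X ^ 4 : ℚ[X]) ≠ 0 := pow_ne_zero _ Polynomial.X_ne_zero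

lemma root4 : (AdjoinRoot.root (Polynomial.X ^ 4 : ℚ[X])) ^ 4 = 0 := by
  have := AdjoinRoot.eval₂_root (Polynomial.X ^ 4 : ℚ[X])
  simpa using this

set_option maxHeartbeats 1000000 in
theorem stmt_17 (d : ℕ) (hd : 4 ≤ d) :
    ∃ B : Module.Basis (Fin 4) ℚ (R3 ⧸ Jrel d),
      ∀ i : Fin 4, B i = Ideal.Quotient.mk (Jrel d) (cc 0 ^ (i : ℕ)) := by
  set q : ℚ := (d : ℚ) with hq
  have hq4 : (4 : ℚ) ≤ q := by rw [hq]; exact_mod_cast hd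
  have h3 : q - 3 ≠ 0 := by nlinarith
  have h33 : (q - 3) ^ 2 * (q ^ 2 - 3 * q + 3) ≠ 0 := by
    apply mul_ne_zero (pow_ne_zero _ h3); nlinarith
  set a : ℚ := (q - 1) / (q - 3) with ha
  set b : ℚ := ((q - 1) ^ 2 * (q ^ 2 - 3 * q + 1)) / ((q - 3) ^ 2 * (q ^ 2 - 3 * q + 3)) with hb
  set r : AR := AdjoinRoot.root (Polynomial.X ^ 4 : ℚ[X]) with hr
  have hr4 : r ^ 4 = 0 := root4
  set A₁ : ℚ →+* AR := algebraMap ℚ AR with hA₁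
  have haq : A₁ ((q - 3) * a) = A₁ (q - 1) := by
    congr 1; rw [ha]; field_simp
  have hbq : A₁ ((q - 3) ^ 2 * (q ^ 2 - 3 * q + 3) * b) = A₁ ((q - 1) ^ 2 * (q ^ 2 - 3 * q + 1)) := by
    congr 1; rw [hb, mul_comm]; exact div_mul_cancel₀ _ h33
  -- the forward map
  set φ : R3 →ₐ[ℚ] AR := MvPolynomial.aeval ![r, a • r ^ 2, b • r ^ 3] with hφ
  have hφ0 : φ (cc 0) = r := by simp [hφ, cc]
  have hφ1 : φ (cc 1) = a • r ^ 2 := by simp [hφ, cc]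
  have hφ2 : φ (cc 2) = b • r ^ 3 := by simp [hφ, cc]
  have hφd : φ ((d : R3)) = A₁ q := by
    simp [hq, hA₁, map_natCast]
  have hJ : ∀ x ∈ Jrel d, φ x = 0 := by
    have : Jrel d ≤ RingHom.ker (φ : R3 →+* AR) := by
      rw [Jrel, Ideal.span_le]
      rintro x hx
      simp only [Set.mem_insert_iff, Set.mem_singleton_iff] at hx
      rcases hx with rfl | rfl | rfl | rfl <;>
        simp only [SetLike.mem_coe, RingHom.mem_ker, AlgHom.coe_toRingHom, map_sub, map_mul,
          map_pow, map_add, map_ofNat, map_one, hφ0, hφ1, hφ2, hφd, Algebra.smul_def, ← hA₁]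
      · simp only [map_mul, map_sub, map_ofNat, map_one] at haq
        linear_combination r ^ 2 * haq
      · simp only [map_mul, map_pow, map_sub, map_add, map_ofNat, map_one] at hbq
        linear_combination r ^ 3 * hbq
      · linear_combination A₁ b * hr4
      · exact hr4
    intro x hx
    exact this hx
  set φ' : (R3 ⧸ Jrel d) →ₐ[ℚ] AR := Ideal.Quotient.liftₐ (Jrel d) φ hJ with hφ'
  have hφ'mk : ∀ x : R3, φ' (Ideal.Quotient.mk (Jrel d) x) = φ x := fun x => by
    rw [hφ', Ideal.Quotient.liftₐ_apply]; rfl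
  -- the inverse map
  have hc14 : (cc 0 : R3) ^ 4 ∈ Jrel d := Ideal.subset_span (by simp)
  have hmkc4 : (Ideal.Quotient.mk (Jrel d) (cc 0)) ^ 4 = 0 := by
    rw [← map_pow, Ideal.Quotient.eq_zero_iff_mem]; exact hc14
  set ψ : AR →ₐ[ℚ] (R3 ⧸ Jrel d) :=
    AdjoinRoot.liftAlgHom (Polynomial.X ^ 4) (Algebra.ofId ℚ _) (Ideal.Quotient.mk (Jrel d) (cc 0))
      (by rw [Polynomial.eval₂_pow, Polynomial.eval₂_X]; exact hmkc4) with hψ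
  have hψr : ψ r = Ideal.Quotient.mk (Jrel d) (cc 0) := by
    rw [hψ, hr]; apply AdjoinRoot.liftAlgHom_root
  -- relations in the quotient
  have hmk1 : Ideal.Quotient.mk (Jrel d) (cc 1) =
      a • Ideal.Quotient.mk (Jrel d) (cc 0 ^ 2) := by
    have hmem : MvPolynomial.C ((q - 3)⁻¹) *
        (((d : R3) - 3) * cc 1 - ((d : R3) - 1) * cc 0 ^ 2) ∈ Jrel d :=
      Ideal.mul_mem_left _ _ (Ideal.subset_span (by simp))
    have hdC : ((d : R3)) = MvPolynomial.C q := by simp [hq]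
    have hd3 : ((d : R3) - 3) = MvPolynomial.C (q - 3) := by
      rw [hdC, map_sub, map_ofNat]
    have hd1 : ((d : R3) - 1) = MvPolynomial.C (q - 1) := by
      rw [hdC, map_sub, map_one]
    have h1 : MvPolynomial.C ((q - 3)⁻¹) * ((d : R3) - 3) = 1 := by
      rw [hd3, ← map_mul, inv_mul_cancel₀ h3, map_one]
    have h2 : MvPolynomial.C ((q - 3)⁻¹) * ((d : R3) - 1) = MvPolynomial.C a := by
      rw [hd1, ← map_mul]
      congr 1; rw [ha]; field_simp
    have key : MvPolynomial.C ((q - 3)⁻¹) *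
        (((d : R3) - 3) * cc 1 - ((d : R3) - 1) * cc 0 ^ 2)
        = cc 1 - MvPolynomial.C a * cc 0 ^ 2 := by
      linear_combination cc 1 * h1 - cc 0 ^ 2 * h2
    rw [key] at hmem
    have h0 := (Ideal.Quotient.eq_zero_iff_mem).mpr hmem
    rw [map_sub, sub_eq_zero] at h0
    rw [h0, show (MvPolynomial.C a * cc 0 ^ 2 : R3) = a • (cc 0 ^ 2) from
      (MvPolynomial.smul_eq_C_mul _ _).symm]
    exact map_smul (Ideal.Quotient.mkₐ ℚ (Jrel d)) a (cc 0 ^ 2)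
  have hmk2 : Ideal.Quotient.mk (Jrel d) (cc 2) =
      b • Ideal.Quotient.mk (Jrel d) (cc 0 ^ 3) := by
    set u : ℚ := (q - 3) ^ 2 * (q ^ 2 - 3 * q + 3) with hu
    have hmem : MvPolynomial.C (u⁻¹) *
        (((d : R3) - 3) ^ 2 * ((d : R3) ^ 2 - 3 * (d : R3) + 3) * cc 2
          - ((d : R3) - 1) ^ 2 * ((d : R3) ^ 2 - 3 * (d : R3) + 1) * cc 0 ^ 3) ∈ Jrel d :=
      Ideal.mul_mem_left _ _ (Ideal.subset_span (by simp))
    have hdC : ((d : R3)) = MvPolynomial.C q := by simp [hq]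
    have hd3 : ((d : R3) - 3) = MvPolynomial.C (q - 3) := by
      rw [hdC, map_sub, map_ofNat]
    have hd1 : ((d : R3) - 1) = MvPolynomial.C (q - 1) := by
      rw [hdC, map_sub, map_one]
    have hs3 : ((d : R3) ^ 2 - 3 * (d : R3) + 3) = MvPolynomial.C (q ^ 2 - 3 * q + 3) := by
      rw [hdC, map_add, map_sub, map_mul, map_pow, map_ofNat]
    have hs1 : ((d : R3) ^ 2 - 3 * (d : R3) + 1) = MvPolynomial.C (q ^ 2 - 3 * q + 1) := by
      rw [hdC, map_add, map_sub, map_mul, map_pow, map_ofNat, map_one]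
      try rfl
    have h1 : MvPolynomial.C (u⁻¹) * (((d : R3) - 3) ^ 2 * ((d : R3) ^ 2 - 3 * (d : R3) + 3)) = 1 := by
      rw [hd3, hs3, ← map_pow, ← map_mul, ← map_mul, ← hu, inv_mul_cancel₀ h33, map_one]
    have h2 : MvPolynomial.C (u⁻¹) * (((d : R3) - 1) ^ 2 * ((d : R3) ^ 2 - 3 * (d : R3) + 1))
        = MvPolynomial.C b := by
      rw [hd1, hs1, ← map_pow, ← map_mul, ← map_mul]
      congr 1; rw [hb, hu]; field_simp
    have key : MvPolynomial.C (u⁻¹) *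
        (((d : R3) - 3) ^ 2 * ((d : R3) ^ 2 - 3 * (d : R3) + 3) * cc 2
          - ((d : R3) - 1) ^ 2 * ((d : R3) ^ 2 - 3 * (d : R3) + 1) * cc 0 ^ 3)
        = cc 2 - MvPolynomial.C b * cc 0 ^ 3 := by
      linear_combination cc 2 * h1 - cc 0 ^ 3 * h2
    rw [key] at hmem
    have h0 := (Ideal.Quotient.eq_zero_iff_mem).mpr hmem
    rw [map_sub, sub_eq_zero] at h0
    rw [h0, show (MvPolynomial.C b * cc 0 ^ 3 : R3) = b • (cc 0 ^ 3) from
      (MvPolynomial.smul_eq_C_mul _ _).symm]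
    exact map_smul (Ideal.Quotient.mkₐ ℚ (Jrel d)) b (cc 0 ^ 3)
  -- the two compositions
  have e₁ : φ'.comp ψ = AlgHom.id ℚ AR := by
    apply AdjoinRoot.algHom_ext
    rw [AlgHom.comp_apply, ← hr, hψr, hφ'mk, hφ0, AlgHom.id_apply]
  have e₂ : ψ.comp φ' = AlgHom.id ℚ (R3 ⧸ Jrel d) := by
    apply Ideal.Quotient.algHom_ext ℚ
    apply MvPolynomial.algHom_ext
    intro i
    fin_cases i <;>
      simp only [AlgHom.comp_apply, Ideal.Quotient.mkₐ_eq_mk, AlgHom.id_apply, hφ'mk]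
    · show ψ (φ (cc 0)) = Ideal.Quotient.mk (Jrel d) (cc 0)
      rw [hφ0, hψr]
    · show ψ (φ (cc 1)) = Ideal.Quotient.mk (Jrel d) (cc 1)
      rw [hφ1, map_smul, map_pow, hψr, ← map_pow, hmk1]
    · show ψ (φ (cc 2)) = Ideal.Quotient.mk (Jrel d) (cc 2)
      rw [hφ2, map_smul, map_pow, hψr, ← map_pow, hmk2]
  set e : (R3 ⧸ Jrel d) ≃ₐ[ℚ] AR := AlgEquiv.ofAlgHom φ' ψ e₁ e₂ with he
  have hdeg : (Polynomial.X ^ 4 : ℚ[X]).natDegree = 4 := by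
    simp
  set pb := AdjoinRoot.powerBasis hX4ne with hpb
  set B : Module.Basis (Fin 4) ℚ (R3 ⧸ Jrel d) :=
    ((pb.basis.reindex (finCongr (by rw [hpb, AdjoinRoot.powerBasis_dim, hdeg]))).map
      e.symm.toLinearEquiv) with hB
  refine ⟨B, fun i => ?_⟩
  rw [hB, Module.Basis.map_apply, Module.Basis.reindex_apply, pb.basis_eq_pow]
  have hgen : pb.gen = r := by rw [hpb, AdjoinRoot.powerBasis_gen]
  have hidx : (((finCongr (show pb.dim = 4 by rw [hpb, AdjoinRoot.powerBasis_dim, hdeg])).symm i : Fin pb.dim) : ℕ) = (i : ℕ) := by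
    simp
  rw [hgen, hidx]
  have hlin : e.symm.toLinearEquiv (r ^ (i : ℕ)) = ψ (r ^ (i : ℕ)) := rfl
  rw [hlin, map_pow, hψr, ← map_pow]
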